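/- For a finite simple graph G on an even number of vertices with degree sequence d_1, ..., d_n, the number of perfect matchings of G is at most the product over all vertices v of (deg(v)!)^(1/(2·deg(v))), with the convention that 0^(1/0) = 0 (i.e., if any vertex is isolated, the graph has no perfect matching). -/

import Mathlib

open Finset
namespace KahnLovasz



/-- `F k = log(k!) / (2k)`, so that `exp (F k) = (k!)^(1/(2k))`. -/
noncomputable def Ff (k : ℕ) : ℝ := Real.log k.factorial / (2 * k)

lemma Ff_zero : Ff 0 = 0 := by simp [Ff]

lemma two_mul_Ff (k : ℕ) : (2 * (k : ℝ)) * Ff k = Real.log k.factorial := by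
  rcases Nat.eq_zero_or_pos k with h | h
  · subst h; simp [Ff]
  · have : (2 * (k:ℝ)) ≠ 0 := by positivity
    unfold Ff; field_simp

lemma log_factorial (k : ℕ) :
    Real.log k.factorial = ∑ j ∈ Finset.range k, Real.log (j + 1) := by
  induction k with
  | zero => simp
  | succ n ih =>
    rw [Nat.factorial_succ, Finset.sum_range_succ]
    push_cast
    rw [Real.log_mul (by positivity) (by positivity), ih]
    ring

lemma sum_range_cast (k : ℕ) :
    ∑ j ∈ Finset.range k, ((j : ℝ) + 1) = k * (k + 1) / 2 := by
  induction k with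
  | zero => simp
  | succ n ih => rw [Finset.sum_range_succ, ih]; push_cast; ring

/-- `2 log k! ≤ 2 k log k - (k-1)` for `k ≥ 1`. -/
lemma key2 (k : ℕ) (hk : 1 ≤ k) :
    2 * Real.log k.factorial ≤ 2 * k * Real.log k - ((k : ℝ) - 1) := by
  have hk0 : (0:ℝ) < k := by exact_mod_cast hk
  have h : ((k:ℝ) - 1) / 2 ≤ k * Real.log k - Real.log k.factorial := by
    rw [log_factorial]
    have : (k : ℝ) * Real.log k - ∑ j ∈ Finset.range k, Real.log (j+1)
        = ∑ j ∈ Finset.range k, (Real.log k - Real.log (j+1)) := by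
      rw [Finset.sum_sub_distrib, Finset.sum_const, Finset.card_range]
      ring
    rw [this]
    have hbound : ∀ j ∈ Finset.range k,
        1 - ((j:ℝ)+1)/k ≤ Real.log k - Real.log (j+1) := by
      intro j hj
      have hj' : (j:ℝ) + 1 ≤ k := by
        have := Finset.mem_range.mp hj
        exact_mod_cast this
      have hpos : (0:ℝ) < (j:ℝ)+1 := by positivity
      have hlog : Real.log (((j:ℝ)+1)/k) ≤ ((j:ℝ)+1)/k - 1 :=
        Real.log_le_sub_one_of_pos (by positivity)
      rw [Real.log_div (by positivity) (by positivity)] at hlog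
      linarith
    calc ((k:ℝ) - 1)/2 = ∑ j ∈ Finset.range k, (1 - ((j:ℝ)+1)/k) := by
          rw [Finset.sum_sub_distrib, Finset.sum_const, Finset.card_range]
          rw [← Finset.sum_div, sum_range_cast]
          field_simp
          ring
      _ ≤ _ := Finset.sum_le_sum hbound
  linarith

/-- `log(k+1) ≤ log k + 1/k` for `k ≥ 1`. -/
lemma key1 (k : ℕ) (hk : 1 ≤ k) :
    Real.log ((k:ℝ) + 1) ≤ Real.log k + 1 / k := by
  have hk0 : (0:ℝ) < k := by exact_mod_cast hk
  have hlog : Real.log (((k:ℝ)+1)/k) ≤ ((k:ℝ)+1)/k - 1 :=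
    Real.log_le_sub_one_of_pos (by positivity)
  rw [Real.log_div (by positivity) (by positivity)] at hlog
  have : ((k:ℝ)+1)/k - 1 = 1/k := by field_simp; ring
  linarith [this ▸ hlog]

/-- Concavity of `F`: `F j + F (j+2) ≤ 2 F (j+1)` for `j ≥ 1`. -/
lemma Ff_concave (j : ℕ) (hj : 1 ≤ j) :
    Ff j + Ff (j + 2) ≤ 2 * Ff (j + 1) := by
  set J : ℝ := (j : ℝ) with hJ
  have hJ1 : (1:ℝ) ≤ J := by rw [hJ]; exact_mod_cast hj
  have hJ0 : (0:ℝ) < J := by linarith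
  set a : ℝ := Real.log j.factorial with ha
  set b : ℝ := Real.log ((j:ℝ) + 1) with hb
  set c : ℝ := Real.log ((j:ℝ) + 2) with hc
  -- rewrite the three F values
  have hfac1 : Real.log (((j+1).factorial : ℕ) : ℝ) = a + b := by
    rw [Nat.factorial_succ]
    push_cast
    rw [Real.log_mul (by positivity) (by positivity)]
    ring
  have hfac2 : Real.log (((j+2).factorial : ℕ) : ℝ) = a + b + c := by
    have : (j+2).factorial = (j+2) * (j+1).factorial := rfl
    rw [this]
    push_cast
    rw [Real.log_mul (by positivity) (by positivity), hfac1]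
    ring
  have e1 : Ff j = a / (2 * J) := rfl
  have e2 : Ff (j+1) = (a + b) / (2 * (J + 1)) := by
    rw [Ff, hfac1]; push_cast; ring
  have e3 : Ff (j+2) = (a + b + c) / (2 * (J + 2)) := by
    rw [Ff, hfac2]; push_cast; ring
  -- the key algebraic inequality
  have hkey : 2 * a + (J^2 + J) * c ≤ (J^2 + 3*J) * b := by
    -- from key2 at j+1 and key1 at j+1
    have h2 := key2 (j+1) (by omega)
    have h1 := key1 (j+1) (by omega)
    push_cast at h2 h1
    -- h2 : 2 * log (j+1)! ≤ 2(J+1) log(J+1) - J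
    rw [hfac1] at h2
    -- h1 : log (J+2) ≤ log (J+1) + 1/(J+1)
    have hc' : c ≤ b + 1 / (J + 1) := by
      have : ((j:ℝ) + 1) + 1 = (j:ℝ) + 2 := by ring
      rw [this] at h1
      exact h1
    have hmul : (J^2 + J) * c ≤ (J^2 + J) * b + J := by
      have hpos : (0:ℝ) ≤ J^2 + J := by positivity
      have := mul_le_mul_of_nonneg_left hc' hpos
      have hJne : J + 1 ≠ 0 := by positivity
      calc (J^2 + J) * c ≤ (J^2 + J) * (b + 1/(J+1)) := this
        _ = (J^2 + J) * b + J := by field_simp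
    nlinarith [h2, hmul]
  rw [e1, e2, e3, mul_div_assoc']
  rw [div_add_div _ _ (by positivity) (by positivity),
      div_le_div_iff₀ (by positivity) (by positivity)]
  nlinarith [hkey, hJ0]




variable {V : Type*} [Fintype V] [DecidableEq V] (G : SimpleGraph V) [DecidableRel G.Adj]

/-- Perfect matchings of `G` restricted to `s`, as involutions fixing the complement. -/
def pmF (s : Finset V) : Finset (V → V) :=
  Finset.univ.filter (fun m =>
    (∀ v ∈ s, m v ∈ s ∧ G.Adj v (m v) ∧ m (m v) = v) ∧ ∀ v, v ∉ s → m v = v)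

/-- Number of perfect matchings on `s`. -/
def pmc (s : Finset V) : ℕ := (pmF G s).card

/-- degree of `w` within `s`. -/
def ds (s : Finset V) (w : V) : ℕ := (s.filter (fun u => G.Adj w u)).card

lemma mem_pmF {s : Finset V} {m : V → V} :
    m ∈ pmF G s ↔ (∀ v ∈ s, m v ∈ s ∧ G.Adj v (m v) ∧ m (m v) = v)
      ∧ ∀ v, v ∉ s → m v = v := by
  simp [pmF]

/-- The fiber bijection: matchings of `s` sending `v ↦ u` correspond to
matchings of `s \ {v, u}`. -/
lemma card_fiber {s : Finset V} {v u : V} (hv : v ∈ s) (hu : u ∈ s)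
    (hadj : G.Adj v u) :
    ((pmF G s).filter (fun m => m v = u)).card = pmc G (s \ {v, u}) := by
  have hvu : v ≠ u := G.ne_of_adj hadj
  rw [pmc]
  apply Finset.card_bij'
    (fun m _ => Function.update (Function.update m v v) u u)
    (fun m _ => Function.update (Function.update m v u) u v)
  case hi =>
    intro m hm
    rw [Finset.mem_filter] at hm
    obtain ⟨hm, hmv⟩ := hm
    rw [mem_pmF] at hm
    obtain ⟨h1, h2⟩ := hm
    have hmu : m u = v := by
      have := (h1 v hv).2.2
      rw [hmv] at this; exact this
    rw [mem_pmF]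
    constructor
    · intro x hx
      rw [Finset.mem_sdiff, Finset.mem_insert, Finset.mem_singleton] at hx
      obtain ⟨hxs, hxvu⟩ := hx
      push_neg at hxvu
      obtain ⟨hxv, hxu⟩ := hxvu
      have hmx : Function.update (Function.update m v v) u u x = m x := by
        rw [Function.update_of_ne hxu, Function.update_of_ne hxv]
      have hmxv : m x ≠ v := by
        intro h
        have := (h1 x hxs).2.2
        rw [h, hmv] at this
        exact hxu this.symm
      have hmxu : m x ≠ u := by
        intro h
        have := (h1 x hxs).2.2
        rw [h, hmu] at this
        exact hxv this.symm
      refine ⟨?_, ?_, ?_⟩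
      · rw [hmx, Finset.mem_sdiff, Finset.mem_insert, Finset.mem_singleton]
        exact ⟨(h1 x hxs).1, by push_neg; exact ⟨hmxv, hmxu⟩⟩
      · rw [hmx]; exact (h1 x hxs).2.1
      · rw [hmx, Function.update_of_ne hmxu, Function.update_of_ne hmxv]
        exact (h1 x hxs).2.2
    · intro x hx
      rw [Finset.mem_sdiff, Finset.mem_insert, Finset.mem_singleton] at hx
      push_neg at hx
      by_cases hxu : x = u
      · subst hxu; simp [Function.update_self]
      by_cases hxv : x = v
      · subst hxv; rw [Function.update_of_ne hxu, Function.update_self]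
      rw [Function.update_of_ne hxu, Function.update_of_ne hxv]
      exact h2 x (fun hxs => ((hx hxs).elim hxv hxu))
  case hj =>
    intro m' hm'
    rw [mem_pmF] at hm'
    obtain ⟨h1, h2⟩ := hm'
    have hvns : v ∉ s \ {v, u} := by simp
    have huns : u ∉ s \ {v, u} := by simp
    have hm'v : m' v = v := h2 v hvns
    have hm'u : m' u = u := h2 u huns
    rw [Finset.mem_filter]
    constructor
    · rw [mem_pmF]
      constructor
      · intro x hxs
        by_cases hxv : x = v
        · subst hxv
          rw [Function.update_of_ne hvu, Function.update_self]
          refine ⟨hu, hadj, ?_⟩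
          rw [Function.update_self]
        by_cases hxu : x = u
        · subst hxu
          rw [Function.update_self]
          refine ⟨hv, hadj.symm, ?_⟩
          rw [Function.update_of_ne hvu, Function.update_self]
        · rw [Function.update_of_ne hxu, Function.update_of_ne hxv]
          by_cases hxmem : x ∈ s \ {v, u}
          · obtain ⟨ha, hb, hc⟩ := h1 x hxmem
            rw [Finset.mem_sdiff, Finset.mem_insert, Finset.mem_singleton] at ha
            push_neg at ha
            refine ⟨ha.1, hb, ?_⟩
            rw [Function.update_of_ne ha.2.2, Function.update_of_ne ha.2.1]
            exact hc
          · exfalso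
            apply hxmem
            rw [Finset.mem_sdiff, Finset.mem_insert, Finset.mem_singleton]
            push_neg
            exact ⟨hxs, hxv, hxu⟩
      · intro x hxs
        have hxv : x ≠ v := fun h => hxs (h ▸ hv)
        have hxu : x ≠ u := fun h => hxs (h ▸ hu)
        rw [Function.update_of_ne hxu, Function.update_of_ne hxv]
        apply h2
        rw [Finset.mem_sdiff]
        exact fun h => hxs h.1
    · rw [Function.update_of_ne hvu, Function.update_self]
  case left_inv =>
    intro m hm
    rw [Finset.mem_filter] at hm
    obtain ⟨hm, hmv⟩ := hm
    rw [mem_pmF] at hm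
    have hmu : m u = v := by
      have := (hm.1 v hv).2.2
      rw [hmv] at this; exact this
    funext x
    by_cases hxu : x = u
    · subst hxu
      rw [Function.update_self]
      exact hmu.symm
    by_cases hxv : x = v
    · subst hxv
      rw [Function.update_of_ne hvu, Function.update_self]
      exact hmv.symm
    rw [Function.update_of_ne hxu, Function.update_of_ne hxv,
        Function.update_of_ne hxu, Function.update_of_ne hxv]
  case right_inv =>
    intro m' hm'
    rw [mem_pmF] at hm'
    have hm'v : m' v = v := hm'.2 v (by simp)
    have hm'u : m' u = u := hm'.2 u (by simp)
    funext x
    by_cases hxu : x = u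
    · subst hxu; rw [Function.update_self]; exact hm'u.symm
    by_cases hxv : x = v
    · subst hxv
      rw [Function.update_of_ne hvu, Function.update_self]
      exact hm'v.symm
    rw [Function.update_of_ne hxu, Function.update_of_ne hxv,
        Function.update_of_ne hxu, Function.update_of_ne hxv]

lemma maps_to_nbhd {s : Finset V} {m : V → V} (hm : m ∈ pmF G s) {v : V}
    (hv : v ∈ s) : m v ∈ s.filter (fun u => G.Adj v u) := by
  rw [mem_pmF] at hm
  rw [Finset.mem_filter]
  exact ⟨(hm.1 v hv).1, (hm.1 v hv).2.1⟩

/-- The recursion. -/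
lemma pmc_rec {s : Finset V} {v : V} (hv : v ∈ s) :
    pmc G s = ∑ u ∈ s.filter (fun u => G.Adj v u), pmc G (s \ {v, u}) := by
  rw [pmc, Finset.card_eq_sum_card_fiberwise (f := fun m => m v)
    (t := s.filter (fun u => G.Adj v u)) (fun m hm => maps_to_nbhd G hm hv)]
  apply Finset.sum_congr rfl
  intro u hu
  rw [Finset.mem_filter] at hu
  exact card_fiber G hv hu.1 hu.2

/-- Product over matchings as product over neighbors. -/
lemma prod_over_matchings {s : Finset V} {v : V} (hv : v ∈ s) (h : V → ℝ) :
    ∏ m ∈ pmF G s, h (m v)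
      = ∏ u ∈ s.filter (fun u => G.Adj v u), h u ^ (pmc G (s \ {v, u})) := by
  rw [← Finset.prod_fiberwise_of_maps_to (g := fun m => m v)
    (t := s.filter (fun u => G.Adj v u)) (fun m hm => maps_to_nbhd G hm hv)]
  apply Finset.prod_congr rfl
  intro u hu
  rw [Finset.mem_filter] at hu
  rw [← card_fiber G hv hu.1 hu.2, ← Finset.prod_const]
  apply Finset.prod_congr rfl
  intro m hm
  rw [Finset.mem_filter] at hm
  rw [hm.2]




/-- Weighted AM-GM for `x ↦ x log x`: `P^P ≤ r^P ∏ t^t` when `P = ∑ t`. -/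
lemma jensen_pow {ι : Type*} (B : Finset ι) (t : ι → ℕ) :
    ((∑ u ∈ B, t u : ℕ) : ℝ) ^ (∑ u ∈ B, t u)
      ≤ (B.card : ℝ) ^ (∑ u ∈ B, t u) * ∏ u ∈ B, (t u : ℝ) ^ (t u) := by
  set P : ℕ := ∑ u ∈ B, t u with hP
  rcases Nat.eq_zero_or_pos P with h0 | hpos
  · have ht : ∀ u ∈ B, t u = 0 := by
      intro u hu
      exact Finset.sum_eq_zero_iff.mp (hP.symm.trans h0) u hu
    rw [h0]
    have : ∏ u ∈ B, (t u : ℝ) ^ (t u) = 1 := by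
      apply Finset.prod_eq_one
      intro u hu
      rw [ht u hu]
      simp
    rw [this]
    simp
  · have hB : B.Nonempty := by
      by_contra h
      rw [Finset.not_nonempty_iff_eq_empty] at h
      rw [h] at hP
      simp at hP
      omega
    have hr : (0:ℝ) < B.card := by exact_mod_cast Finset.card_pos.mpr hB
    have hPr : (0:ℝ) < P := by exact_mod_cast hpos
    -- Jensen for x log x
    have hconv := Real.convexOn_mul_log
    have hjensen := hconv.map_sum_le (t := B) (w := fun _ => 1 / (B.card : ℝ))
      (p := fun u => (t u : ℝ)) (fun u _ => by positivity)
      (by rw [Finset.sum_const]; simp; field_simp)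
      (fun u _ => Set.mem_Ici.mpr (by positivity))
    simp only [smul_eq_mul] at hjensen
    have hsum : ∑ u ∈ B, (1 / (B.card:ℝ)) * (t u : ℝ) = (P : ℝ) / B.card := by
      rw [← Finset.mul_sum]
      push_cast [hP]
      ring
    rw [hsum] at hjensen
    -- hjensen : (P/r) * log (P/r) ≤ ∑ (1/r) * (t u * log (t u))
    have hkey : (P:ℝ) * Real.log P - (P:ℝ) * Real.log B.card
        ≤ ∑ u ∈ B, (t u : ℝ) * Real.log (t u) := by
      have h1 : (P:ℝ) / B.card * Real.log ((P:ℝ) / B.card)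
          = ((P:ℝ) * (Real.log P - Real.log B.card)) / B.card := by
        rw [Real.log_div (by positivity) (by positivity)]
        ring
      rw [h1] at hjensen
      have h2 : ∑ u ∈ B, (1 / (B.card:ℝ)) * ((t u:ℝ) * Real.log (t u))
          = (∑ u ∈ B, (t u : ℝ) * Real.log (t u)) / B.card := by
        rw [← Finset.mul_sum]
        ring
      rw [h2] at hjensen
      have h3 := mul_le_mul_of_nonneg_right hjensen hr.le
      rw [div_mul_cancel₀ _ hr.ne', div_mul_cancel₀ _ hr.ne'] at h3
      linarith
    -- move to exponentials
    have hppos : (0:ℝ) < ∏ u ∈ B, (t u : ℝ) ^ (t u) := by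
      apply Finset.prod_pos
      intro u hu
      rcases Nat.eq_zero_or_pos (t u) with h | h
      · rw [h]; simp
      · have : (0:ℝ) < t u := by exact_mod_cast h
        positivity
    have hRpos : (0:ℝ) < (B.card : ℝ) ^ P * ∏ u ∈ B, (t u : ℝ) ^ (t u) :=
      mul_pos (by positivity) hppos
    rw [← Real.log_le_log_iff (by positivity) hRpos]
    rw [Real.log_pow, Real.log_mul (by positivity) hppos.ne',
      Real.log_pow, Real.log_prod (fun u hu => by
        rcases Nat.eq_zero_or_pos (t u) with h | h
        · rw [h]; simp
        · have : (0:ℝ) < t u := by exact_mod_cast h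
          positivity)]
    have hlogs : ∀ u ∈ B, Real.log ((t u:ℝ) ^ (t u)) = (t u : ℝ) * Real.log (t u) := by
      intro u hu
      rw [Real.log_pow]
    rw [Finset.sum_congr rfl hlogs]
    linarith


section Graph
variable {V : Type*} [Fintype V] [DecidableEq V] (G : SimpleGraph V) [DecidableRel G.Adj]

lemma filter_sdiff' (p : V → Prop) [DecidablePred p] (s t : Finset V) :
    (s \ t).filter p = s.filter p \ t.filter p := by
  ext x
  simp only [Finset.mem_filter, Finset.mem_sdiff]
  tauto

/-- Degree drop when removing a matched pair. -/
lemma ds_sdiff_pair {s : Finset V} {m : V → V} (hm : m ∈ pmF G s) {v w : V}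
    (hv : v ∈ s) :
    ds G (s \ {v, m v}) w
      + ((if G.Adj w v then 1 else 0) + (if G.Adj w (m v) then 1 else 0))
      = ds G s w := by
  obtain ⟨h1, _⟩ := (mem_pmF G).mp hm
  have hmv : m v ∈ s := (h1 v hv).1
  have hvmv : v ≠ m v := G.ne_of_adj (h1 v hv).2.1
  rw [ds, filter_sdiff']
  have hsub : ({v, m v} : Finset V).filter (fun u => G.Adj w u)
      ⊆ s.filter (fun u => G.Adj w u) := by
    apply Finset.filter_subset_filter
    intro x hx
    rw [Finset.mem_insert, Finset.mem_singleton] at hx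
    rcases hx with rfl | rfl
    · exact hv
    · exact hmv
  rw [Finset.card_sdiff_of_subset hsub]
  have hcard : (({v, m v} : Finset V).filter (fun u => G.Adj w u)).card
      = (if G.Adj w v then 1 else 0) + (if G.Adj w (m v) then 1 else 0) := by
    rw [Finset.filter_insert, Finset.filter_singleton]
    by_cases h1' : G.Adj w v <;> by_cases h2' : G.Adj w (m v) <;>
      simp [h1', h2', Finset.card_insert_of_notMem, hvmv]
  rw [hcard]
  have hle : (if G.Adj w v then 1 else 0) + (if G.Adj w (m v) then 1 else 0)
      ≤ (s.filter (fun u => G.Adj w u)).card := by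
    rw [← hcard]
    exact Finset.card_le_card hsub
  rw [ds] at *
  omega

lemma m_maps_T {s : Finset V} {m : V → V} (hm : m ∈ pmF G s) {w : V}
    (hw : w ∈ s) : ∀ v ∈ s \ {w, m w}, m v ∈ s \ {w, m w} := by
  obtain ⟨h1, _⟩ := (mem_pmF G).mp hm
  intro v hv
  rw [Finset.mem_sdiff, Finset.mem_insert, Finset.mem_singleton] at hv ⊢
  push_neg at hv ⊢
  obtain ⟨hvs, hvw, hvmw⟩ := hv
  refine ⟨(h1 v hvs).1, ?_, ?_⟩
  · intro h
    exact hvmw (by rw [← h, (h1 v hvs).2.2])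
  · intro h
    have := congrArg m h
    rw [(h1 v hvs).2.2, (h1 w hw).2.2] at this
    exact hvw this

/-- Sum of degree drops: `∑ δ_v = 2 (d_w - 1)`. -/
lemma sum_delta {s : Finset V} {m : V → V} (hm : m ∈ pmF G s) {w : V}
    (hw : w ∈ s) :
    (∑ v ∈ s \ {w, m w},
      ((if G.Adj w v then 1 else 0) + (if G.Adj w (m v) then 1 else 0))) + 2
      = 2 * ds G s w := by
  obtain ⟨h1, _⟩ := (mem_pmF G).mp hm
  have hmw : m w ∈ s := (h1 w hw).1
  have hadjw : G.Adj w (m w) := (h1 w hw).2.1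
  have hwmw : w ≠ m w := G.ne_of_adj hadjw
  have key : ∀ t : Finset V, (∑ v ∈ t, (if G.Adj w v then (1:ℕ) else 0))
      = (t.filter (fun v => G.Adj w v)).card := by
    intro t
    simp [Finset.sum_boole]
  have hfilter_pair : ({w, m w} : Finset V).filter (fun v => G.Adj w v)
      = {m w} := by
    rw [Finset.filter_insert, Finset.filter_singleton]
    simp [G.irrefl, hadjw]
  have hmem : m w ∈ s.filter (fun v => G.Adj w v) :=
    Finset.mem_filter.mpr ⟨hmw, hadjw⟩
  have part1 : (∑ v ∈ s \ {w, m w}, (if G.Adj w v then (1:ℕ) else 0)) + 1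
      = ds G s w := by
    rw [key, filter_sdiff', hfilter_pair,
      Finset.card_sdiff_of_subset (Finset.singleton_subset_iff.mpr hmem),
      Finset.card_singleton]
    have : 1 ≤ (s.filter (fun v => G.Adj w v)).card :=
      Finset.card_pos.mpr ⟨m w, hmem⟩
    rw [ds]
    omega
  have part2 : (∑ v ∈ s \ {w, m w}, (if G.Adj w (m v) then (1:ℕ) else 0))
      = ∑ v ∈ s \ {w, m w}, (if G.Adj w v then (1:ℕ) else 0) := by
    apply Finset.sum_nbij' (i := fun v => m v) (j := fun v => m v)
    · exact fun v hv => m_maps_T G hm hw v hv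
    · exact fun v hv => m_maps_T G hm hw v hv
    · intro v hv
      rw [Finset.mem_sdiff] at hv
      exact (h1 v hv.1).2.2
    · intro v hv
      rw [Finset.mem_sdiff] at hv
      exact (h1 v hv.1).2.2
    · exact fun a _ => rfl
  rw [Finset.sum_add_distrib, part2]
  omega

end Graph
/-- Chord bound from concavity. -/
lemma Ff_point (c x δ : ℕ) (hx : 1 ≤ x) (hδ : δ ≤ 2) (hsum : x + δ = c + 1) :
    Ff x ≤ Ff (c+1) - δ * (Ff (c+1) - Ff c) := by
  interval_cases δ
  · have : x = c + 1 := by omega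
    subst this
    simp
  · have : x = c := by omega
    subst this
    push_cast
    linarith
  · have hc : c = x + 1 := by omega
    subst hc
    have := Ff_concave x hx
    push_cast
    linarith

section Graph2
variable {V : Type*} [Fintype V] [DecidableEq V] (G : SimpleGraph V) [DecidableRel G.Adj]

lemma ds_pos_of_mem {s : Finset V} {m : V → V} (hm : m ∈ pmF G s) {w : V}
    (hw : w ∈ s) : 1 ≤ ds G s w := by
  obtain ⟨h1, _⟩ := (mem_pmF G).mp hm
  apply Finset.card_pos.mpr
  exact ⟨m w, Finset.mem_filter.mpr ⟨(h1 w hw).1, (h1 w hw).2.1⟩⟩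

lemma ds_pos_small {s : Finset V} {m : V → V} (hm : m ∈ pmF G s) {v w : V}
    (hv : v ∈ s) (hw : w ∈ s \ {v, m v}) : 1 ≤ ds G (s \ {v, m v}) w := by
  obtain ⟨h1, _⟩ := (mem_pmF G).mp hm
  rw [Finset.mem_sdiff, Finset.mem_insert, Finset.mem_singleton] at hw
  push_neg at hw
  obtain ⟨hws, hwv, hwmv⟩ := hw
  apply Finset.card_pos.mpr
  refine ⟨m w, Finset.mem_filter.mpr ⟨?_, (h1 w hws).2.1⟩⟩
  rw [Finset.mem_sdiff, Finset.mem_insert, Finset.mem_singleton]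
  push_neg
  refine ⟨(h1 w hws).1, ?_, ?_⟩
  · intro h
    exact hwmv (by rw [← h, (h1 w hws).2.2])
  · intro h
    have := congrArg m h
    rw [(h1 w hws).2.2, (h1 v hv).2.2] at this
    exact hwv this

/-- The per-vertex analytic bound. -/
lemma per_vertex_bound {s : Finset V} {m : V → V} (hm : m ∈ pmF G s) {w : V}
    (hw : w ∈ s) :
    (ds G s w : ℝ) * ∏ v ∈ s \ {w, m w}, Real.exp (Ff (ds G (s \ {v, m v}) w))
      ≤ Real.exp (Ff (ds G s w)) ^ s.card := by
  obtain ⟨h1, _⟩ := (mem_pmF G).mp hm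
  have hmw : m w ∈ s := (h1 w hw).1
  have hwmw : w ≠ m w := G.ne_of_adj (h1 w hw).2.1
  set T : Finset V := s \ {w, m w} with hT
  have hTcard : T.card + 2 = s.card := by
    rw [hT, Finset.card_sdiff_of_subset]
    · have : ({w, m w} : Finset V).card = 2 := by
        rw [Finset.card_insert_of_notMem (by simpa using hwmw),
          Finset.card_singleton]
      rw [this]
      have h2le : 2 ≤ s.card := by
        have : ({w, m w} : Finset V).card ≤ s.card := by
          apply Finset.card_le_card
          intro x hx
          rw [Finset.mem_insert, Finset.mem_singleton] at hx
          rcases hx with rfl | rfl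
          · exact hw
          · exact hmw
        omega
      omega
    · intro x hx
      rw [Finset.mem_insert, Finset.mem_singleton] at hx
      rcases hx with rfl | rfl
      · exact hw
      · exact hmw
  set d : ℕ := ds G s w with hd
  have hd1 : 1 ≤ d := ds_pos_of_mem G hm hw
  obtain ⟨c, hc⟩ : ∃ c, d = c + 1 := ⟨d - 1, by omega⟩
  -- pointwise bound on each factor
  set δ : V → ℕ := fun v =>
    (if G.Adj w v then 1 else 0) + (if G.Adj w (m v) then 1 else 0) with hδdef
  have hdrop : ∀ v ∈ T, ds G (s \ {v, m v}) w + δ v = d := by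
    intro v hv
    rw [Finset.mem_sdiff] at hv
    exact ds_sdiff_pair G hm hv.1
  have hpoint : ∀ v ∈ T, Ff (ds G (s \ {v, m v}) w)
      ≤ Ff (c+1) - (δ v : ℝ) * (Ff (c+1) - Ff c) := by
    intro v hv
    have hvs : v ∈ s := (Finset.mem_sdiff.mp hv).1
    apply Ff_point
    · exact ds_pos_small G hm hvs (by
        rw [hT] at hv
        rw [Finset.mem_sdiff, Finset.mem_insert, Finset.mem_singleton] at hv ⊢
        push_neg at hv ⊢
        refine ⟨hw, fun h => hv.2.1 h.symm, ?_⟩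
        intro h
        have := congrArg m h
        rw [(h1 v hvs).2.2] at this
        exact hv.2.2 this.symm)
    · rw [hδdef]
      dsimp only
      split_ifs <;> norm_num
    · rw [← hc]
      exact hdrop v hv
  have hsumδ : (∑ v ∈ T, δ v) + 2 = 2 * d := by
    rw [hδdef, hd, hT]
    exact sum_delta G hm hw
  -- sum the pointwise bounds
  have hsums : ∑ v ∈ T, Ff (ds G (s \ {v, m v}) w)
      ≤ T.card * Ff (c+1) - (2 * c : ℝ) * (Ff (c+1) - Ff c) := by
    calc ∑ v ∈ T, Ff (ds G (s \ {v, m v}) w)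
        ≤ ∑ v ∈ T, (Ff (c+1) - (δ v : ℝ) * (Ff (c+1) - Ff c)) :=
          Finset.sum_le_sum hpoint
      _ = T.card * Ff (c+1) - (∑ v ∈ T, (δ v : ℝ)) * (Ff (c+1) - Ff c) := by
          rw [Finset.sum_sub_distrib, Finset.sum_const, ← Finset.sum_mul]
          push_cast
          ring
      _ = T.card * Ff (c+1) - (2 * c : ℝ) * (Ff (c+1) - Ff c) := by
          have : (∑ v ∈ T, (δ v : ℝ)) = (2 * c : ℝ) := by
            have := hsumδ
            rw [hc] at this
            push_cast [← Nat.cast_sum]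
            exact_mod_cast by omega
          rw [this]
  -- key factorial identity: log d + log c! = log d!
  have hfact : Real.log (d : ℝ) + Real.log (c.factorial : ℝ)
      = Real.log (d.factorial : ℝ) := by
    rw [hc, Nat.factorial_succ]
    push_cast
    rw [Real.log_mul (by positivity) (by positivity)]
  have h2c : (2 * (c:ℝ)) * Ff c = Real.log (c.factorial) := two_mul_Ff c
  have h2d : (2 * (d:ℝ)) * Ff d = Real.log (d.factorial) := two_mul_Ff d
  -- final log-level inequality
  have hlog : Real.log (d : ℝ) + ∑ v ∈ T, Ff (ds G (s \ {v, m v}) w)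
      ≤ (s.card : ℝ) * Ff d := by
    have hcast : ((c:ℝ) + 1) = (d : ℝ) := by rw [hc]; push_cast; ring
    have hFd : Ff (c+1) = Ff d := by rw [hc]
    rw [hFd] at hsums
    have hn : (s.card : ℝ) = (T.card : ℝ) + 2 := by
      rw [← hTcard]; push_cast; ring
    rw [hn]
    have hdc : (d : ℝ) = (c : ℝ) + 1 := by rw [hc]; push_cast; ring
    rw [hdc] at h2d
    linarith [hsums, hfact, h2c, h2d]
  -- exponentiate
  have hdpos : (0:ℝ) < d := by exact_mod_cast hd1
  calc (d : ℝ) * ∏ v ∈ T, Real.exp (Ff (ds G (s \ {v, m v}) w))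
      = Real.exp (Real.log d + ∑ v ∈ T, Ff (ds G (s \ {v, m v}) w)) := by
        rw [Real.exp_add, Real.exp_log hdpos, Real.exp_sum]
    _ ≤ Real.exp ((s.card : ℝ) * Ff d) := Real.exp_le_exp.mpr hlog
    _ = Real.exp (Ff d) ^ s.card := Real.exp_nat_mul _ _

end Graph2

/-- factor for a vertex of degree `k`. -/
noncomputable def gg (k : ℕ) : ℝ := if k = 0 then 0 else Real.exp (Ff k)

lemma gg_nonneg (k : ℕ) : 0 ≤ gg k := by
  rw [gg]; split_ifs
  · exact le_refl 0
  · positivity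

section Graph3
variable {V : Type*} [Fintype V] [DecidableEq V] (G : SimpleGraph V) [DecidableRel G.Adj]

/-- Main inequality, by strong induction. -/
theorem main_bound (s : Finset V) :
    (pmc G s : ℝ) ≤ ∏ w ∈ s, gg (ds G s w) := by
  induction s using Finset.strongInduction with
  | _ s ih => ?_
  rcases Nat.eq_zero_or_pos (pmc G s) with hP0 | hPpos
  · rw [hP0]
    push_cast
    exact Finset.prod_nonneg fun w _ => gg_nonneg _
  obtain ⟨m₀, hm₀⟩ := Finset.card_pos.mp hPpos
  rcases Finset.eq_empty_or_nonempty s with rfl | hs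
  · -- empty case: at most one matching
    have : pmc G ∅ ≤ 1 := by
      rw [pmc]
      apply Finset.card_le_one.mpr
      intro a ha b hb
      rw [mem_pmF] at ha hb
      funext x
      rw [ha.2 x (Finset.notMem_empty x), hb.2 x (Finset.notMem_empty x)]
    simpa using (by exact_mod_cast this : (pmc G ∅ : ℝ) ≤ 1)
  -- nonempty case
  set P : ℕ := pmc G s with hPdef
  set n : ℕ := s.card with hn
  have hn1 : 1 ≤ n := Finset.card_pos.mpr hs
  have hdeg1 : ∀ w ∈ s, 1 ≤ ds G s w := fun w hw => ds_pos_of_mem G hm₀ hw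
  have hggf : ∀ w ∈ s, gg (ds G s w) = Real.exp (Ff (ds G s w)) := by
    intro w hw
    rw [gg, if_neg (by have := hdeg1 w hw; omega)]
  set R : ℝ := ∏ w ∈ s, Real.exp (Ff (ds G s w)) with hR
  have hRnn : 0 ≤ R := Finset.prod_nonneg fun w _ => (Real.exp_pos _).le
  rw [Finset.prod_congr rfl hggf, ← hR]
  -- step 1: per-vertex Jensen bound
  have step1 : ∀ v ∈ s, (P:ℝ) ^ P ≤
      ∏ m ∈ pmF G s, ((ds G s v : ℝ) * (pmc G (s \ {v, m v}) : ℝ)) := by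
    intro v hv
    have hrec := pmc_rec G hv
    have hjen := jensen_pow (s.filter (fun u => G.Adj v u))
      (fun u => pmc G (s \ {v, u}))
    rw [← hrec] at hjen
    have hprod := prod_over_matchings G hv
      (fun u => (pmc G (s \ {v, u}) : ℝ))
    have hA : (pmF G s).card = P := rfl
    calc (P:ℝ) ^ P
        ≤ ((s.filter (fun u => G.Adj v u)).card : ℝ) ^ P
            * ∏ u ∈ s.filter (fun u => G.Adj v u),
                ((pmc G (s \ {v, u}) : ℝ)) ^ (pmc G (s \ {v, u})) := hjen
      _ = (ds G s v : ℝ) ^ P * ∏ m ∈ pmF G s, (pmc G (s \ {v, m v}) : ℝ) := by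
          rw [← hprod]
          rfl
      _ = _ := by
          rw [Finset.prod_mul_distrib, Finset.prod_const, hA]
  -- step 2: take the product over v and swap
  have step2 : (P:ℝ) ^ (n * P) ≤
      ∏ m ∈ pmF G s, ∏ v ∈ s, ((ds G s v : ℝ) * (pmc G (s \ {v, m v}) : ℝ)) := by
    rw [← Finset.prod_comm]
    calc (P:ℝ) ^ (n * P) = ∏ v ∈ s, (P:ℝ) ^ P := by
          rw [Finset.prod_const, ← pow_mul, ← hn, mul_comm]
      _ ≤ _ := Finset.prod_le_prod (fun v _ => by positivity) step1
  -- step 3: per-matching bound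
  have step3 : ∀ m ∈ pmF G s,
      ∏ v ∈ s, ((ds G s v : ℝ) * (pmc G (s \ {v, m v}) : ℝ)) ≤ R ^ n := by
    intro m hm
    obtain ⟨h1, _⟩ := (mem_pmF G).mp hm
    -- apply induction hypothesis
    have hih : ∀ v ∈ s, (pmc G (s \ {v, m v}) : ℝ)
        ≤ ∏ w ∈ s \ {v, m v}, Real.exp (Ff (ds G (s \ {v, m v}) w)) := by
      intro v hv
      have hss : s \ {v, m v} ⊂ s := by
        apply Finset.sdiff_ssubset ?_ ⟨v, Finset.mem_insert_self _ _⟩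
        intro x hx
        rw [Finset.mem_insert, Finset.mem_singleton] at hx
        rcases hx with rfl | rfl
        · exact hv
        · exact (h1 v hv).1
      calc (pmc G (s \ {v, m v}) : ℝ) ≤ _ := ih _ hss
        _ = _ := by
          apply Finset.prod_congr rfl
          intro w hw
          rw [gg, if_neg (by have := ds_pos_small G hm hv hw; omega)]
    have hswap : ∏ v ∈ s, ∏ w ∈ s \ {v, m v}, Real.exp (Ff (ds G (s \ {v, m v}) w))
        = ∏ w ∈ s, ∏ v ∈ s \ {w, m w}, Real.exp (Ff (ds G (s \ {v, m v}) w)) := by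
      apply Finset.prod_comm'
      intro v w
      constructor
      · rintro ⟨hvs, hw⟩
        rw [Finset.mem_sdiff, Finset.mem_insert, Finset.mem_singleton] at hw
        push_neg at hw
        obtain ⟨hws, hwv, hwmv⟩ := hw
        rw [Finset.mem_sdiff, Finset.mem_insert, Finset.mem_singleton]
        push_neg
        refine ⟨⟨hvs, fun h => hwv h.symm, fun h => ?_⟩, hws⟩
        · have := congrArg m h
          rw [(h1 w hws).2.2] at this
          exact hwmv this.symm
      · rintro ⟨hv, hws⟩
        rw [Finset.mem_sdiff, Finset.mem_insert, Finset.mem_singleton] at hv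
        push_neg at hv
        obtain ⟨hvs, hvw, hvmw⟩ := hv
        rw [Finset.mem_sdiff, Finset.mem_insert, Finset.mem_singleton]
        push_neg
        refine ⟨hvs, ⟨hws, fun h => hvw h.symm, fun h => ?_⟩⟩
        · have := congrArg m h
          rw [(h1 v hvs).2.2] at this
          exact hvmw this.symm
    calc ∏ v ∈ s, ((ds G s v : ℝ) * (pmc G (s \ {v, m v}) : ℝ))
        ≤ ∏ v ∈ s, ((ds G s v : ℝ)
            * ∏ w ∈ s \ {v, m v}, Real.exp (Ff (ds G (s \ {v, m v}) w))) := by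
          apply Finset.prod_le_prod
          · intro v _; positivity
          · intro v hv
            exact mul_le_mul_of_nonneg_left (hih v hv) (by positivity)
      _ = ∏ w ∈ s, ((ds G s w : ℝ)
            * ∏ v ∈ s \ {w, m w}, Real.exp (Ff (ds G (s \ {v, m v}) w))) := by
          rw [Finset.prod_mul_distrib, Finset.prod_mul_distrib, hswap]
      _ ≤ ∏ w ∈ s, Real.exp (Ff (ds G s w)) ^ n := by
          apply Finset.prod_le_prod
          · intro w _; positivity
          · intro w hw
            exact per_vertex_bound G hm hw
      _ = R ^ n := by rw [hR, ← Finset.prod_pow]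
  -- assemble
  have hchain : (P:ℝ) ^ (n * P) ≤ R ^ (n * P) := by
    calc (P:ℝ) ^ (n * P) ≤
        ∏ m ∈ pmF G s, ∏ v ∈ s, ((ds G s v : ℝ) * (pmc G (s \ {v, m v}) : ℝ)) :=
          step2
      _ ≤ ∏ m ∈ pmF G s, R ^ n := by
          apply Finset.prod_le_prod ?_ step3
          intro m _
          apply Finset.prod_nonneg
          intro v _
          positivity
      _ = R ^ (n * P) := by
          have hA : (pmF G s).card = P := rfl
          rw [Finset.prod_const, ← pow_mul, hA, mul_comm]
  exact le_of_pow_le_pow_left₀ (by positivity) hRnn hchain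

end Graph3

section Transfer
variable {V : Type*} [Fintype V] [DecidableEq V] (G : SimpleGraph V) [DecidableRel G.Adj]

/-- The partner function of a perfect matching. -/
noncomputable def partner {M : G.Subgraph} (h : M.IsPerfectMatching) (v : V) : V :=
  (h.1 (h.2 v)).choose

lemma partner_adj {M : G.Subgraph} (h : M.IsPerfectMatching) (v : V) :
    M.Adj v (partner G h v) := (h.1 (h.2 v)).choose_spec.1

lemma partner_eq_of_adj {M : G.Subgraph} (h : M.IsPerfectMatching) {v w : V}
    (hw : M.Adj v w) : partner G h v = w :=
  ((h.1 (h.2 v)).choose_spec.2 w hw).symm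

lemma partner_mem_pmF {M : G.Subgraph} (h : M.IsPerfectMatching) :
    partner G h ∈ pmF G Finset.univ := by
  rw [mem_pmF]
  constructor
  · intro v _
    refine ⟨Finset.mem_univ _, M.adj_sub (partner_adj G h v), ?_⟩
    exact partner_eq_of_adj G h (partner_adj G h v).symm
  · intro v hv
    exact absurd (Finset.mem_univ v) hv

lemma card_pm_le : Nat.card {M : G.Subgraph // M.IsPerfectMatching}
    ≤ pmc G Finset.univ := by
  classical
  have hinj : Function.Injective
      (fun M : {M : G.Subgraph // M.IsPerfectMatching} =>
        (⟨partner G M.2, partner_mem_pmF G M.2⟩ :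
          {f : V → V // f ∈ pmF G Finset.univ})) := by
    intro M₁ M₂ hMeq
    have hfun : partner G M₁.2 = partner G M₂.2 := congrArg Subtype.val hMeq
    have hAdj : ∀ N : {M : G.Subgraph // M.IsPerfectMatching}, ∀ a b : V,
        N.1.Adj a b ↔ partner G N.2 a = b := by
      intro N a b
      constructor
      · exact fun hab => partner_eq_of_adj G N.2 hab
      · rintro rfl
        exact partner_adj G N.2 a
    apply Subtype.ext
    apply SimpleGraph.Subgraph.ext
    · rw [Set.eq_univ_of_forall M₁.2.2, Set.eq_univ_of_forall M₂.2.2]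
    · funext a b
      rw [eq_iff_iff, hAdj M₁, hAdj M₂, hfun]
  calc Nat.card {M : G.Subgraph // M.IsPerfectMatching}
      ≤ Nat.card {f : V → V // f ∈ pmF G Finset.univ} :=
        Nat.card_le_card_of_injective _ hinj
    _ = pmc G Finset.univ := by
        rw [Nat.card_eq_finsetCard]
        rfl

lemma ds_univ (w : V) : ds G Finset.univ w = G.degree w := by
  rw [ds, SimpleGraph.degree, SimpleGraph.neighborFinset_eq_filter]

lemma gg_eq_rpow (k : ℕ) :
    gg k = if k = 0 then (0:ℝ)
      else ((k.factorial : ℝ) ^ (1 / (2 * (k : ℝ))) : ℝ) := by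
  rw [gg]
  split_ifs with h
  · rfl
  · rw [Real.rpow_def_of_pos (by positivity), Ff, div_eq_mul_one_div]

end Transfer

end KahnLovasz

open KahnLovasz in
/-- The maximum number of perfect matchings in a graph with a given degree
sequence: `perfmat G ≤ ∏_v (deg(v)!)^(1/(2 deg v))`, with the convention that
a vertex of degree `0` contributes factor `0`. -/
theorem perfmat_le_prod_degree_factorial_rpow
    {V : Type*} [Fintype V] [DecidableEq V] (G : SimpleGraph V)
    [DecidableRel G.Adj] (hV : Even (Fintype.card V)) :
    (Nat.card {M : G.Subgraph // M.IsPerfectMatching} : ℝ) ≤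
      ∏ v : V, if G.degree v = 0 then (0 : ℝ)
        else ((G.degree v).factorial : ℝ) ^ (1 / (2 * (G.degree v : ℝ))) := by
  have h1 : (Nat.card {M : G.Subgraph // M.IsPerfectMatching} : ℝ)
      ≤ (pmc G Finset.univ : ℝ) := by exact_mod_cast card_pm_le G
  refine h1.trans ((main_bound G Finset.univ).trans (le_of_eq ?_))
  apply Finset.prod_congr rfl
  intro v _
  rw [ds_univ, gg_eq_rpow]
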